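/- Let (M, d) be a metric space and let S = (s_1, ..., s_m) and T = (t_1, ..., t_n) be nonempty finite sequences in M. Then Σ_{i=1}^m min_{1≤j≤n} d(s_i, t_j)² ≤ DTW(S, T). -/
import Mathlib


open scoped ENNReal

/-- Dynamic time warping distance on finite sequences over a metric space, with squared
ground distances; by convention `DTW` of an empty sequence is `∞`. -/
noncomputable def DTW {M : Type*} [MetricSpace M] : List M → List M → ℝ≥0∞
  | [], _ => ⊤
  | _ :: _, [] => ⊤
  | [s], [t] => ENNReal.ofReal (dist s t ^ 2)
  | s :: S, t :: T =>
      ENNReal.ofReal (dist s t ^ 2) +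
        min (DTW S T) (min (DTW S (t :: T)) (DTW (s :: S) T))
termination_by S T => S.length + T.length
decreasing_by all_goals (simp <;> omega)

noncomputable def Faux {M : Type*} [MetricSpace M] (S T : List M) : ℝ≥0∞ :=
  ∑ i : Fin S.length, ⨅ j : Fin T.length, ENNReal.ofReal (dist (S.get i) (T.get j) ^ 2)

lemma inf_cons {M : Type*} [MetricSpace M] (s t : M) (T : List M) :
    (⨅ j : Fin (t :: T).length, ENNReal.ofReal (dist s ((t :: T).get j) ^ 2))
      ≤ ⨅ j : Fin T.length, ENNReal.ofReal (dist s (T.get j) ^ 2) :=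
  le_iInf fun j => iInf_le _ j.succ

lemma Faux_cons {M : Type*} [MetricSpace M] (s : M) (S T : List M) :
    Faux (s :: S) T = (⨅ j : Fin T.length, ENNReal.ofReal (dist s (T.get j) ^ 2)) + Faux S T := by
  simp [Faux, Fin.sum_univ_succ]

lemma Faux_mono {M : Type*} [MetricSpace M] (S : List M) (t : M) (T : List M) :
    Faux S (t :: T) ≤ Faux S T :=
  Finset.sum_le_sum fun i _ => inf_cons _ t T

lemma key {M : Type*} [MetricSpace M] :
    ∀ (n : ℕ) (S T : List M), S.length + T.length ≤ n → S ≠ [] → T ≠ [] →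
      Faux S T ≤ DTW S T := by
  intro n
  induction n with
  | zero => intro S T h hS hT; cases S <;> simp_all
  | succ n ih =>
    intro S T h hS hT
    match S, T with
    | [s], t :: T =>
      have h1 : Faux [s] (t :: T) ≤ ENNReal.ofReal (dist s t ^ 2) := by
        rw [Faux_cons]
        simp only [Faux, List.length_nil, Finset.univ_eq_empty, Finset.sum_empty, add_zero]
        exact iInf_le _ (⟨0, Nat.succ_pos _⟩ : Fin (t :: T).length)
      refine h1.trans ?_
      cases T with
      | nil => rw [DTW]
      | cons t' T' =>
        rw [DTW]
        · exact le_self_add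
        · simp
    | s :: s' :: S', t :: T =>
      rw [DTW]
      · rw [Faux_cons]
        refine add_le_add (iInf_le _ (⟨0, Nat.succ_pos _⟩ : Fin (t :: T).length)) ?_
        have hST : Faux (s' :: S') (t :: T) ≤ DTW (s' :: S') (t :: T) := by
          apply ih <;> simp_all <;> omega
        refine le_min ?_ (le_min hST ?_)
        · -- Faux (s'::S') (t::T) ≤ DTW (s'::S') T
          cases T with
          | nil => rw [DTW]; exact le_top
          | cons t' T' =>
            refine (Faux_mono _ t _).trans ?_
            apply ih <;> simp_all <;> omega
        · -- Faux (s'::S') (t::T) ≤ DTW (s::s'::S') T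
          cases T with
          | nil => rw [DTW]; exact le_top
          | cons t' T' =>
            have hh : Faux (s :: s' :: S') (t' :: T') ≤ DTW (s :: s' :: S') (t' :: T') := by
              apply ih <;> simp_all <;> omega
            have h2 : Faux (s' :: S') (t' :: T') ≤ Faux (s :: s' :: S') (t' :: T') := by
              rw [Faux_cons s]; exact le_add_self
            exact le_trans (Faux_mono (s' :: S') t (t' :: T')) (le_trans h2 hh)
      · simp

/-- `Σ_i min_j d(s_i, t_j)² ≤ DTW(S, T)` for nonempty sequences `S`, `T`. -/
theorem statement9
    {M : Type*} [MetricSpace M] (S T : List M) (hS : S ≠ []) (hT : T ≠ []) :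
    ENNReal.ofReal
        (∑ i : Fin S.length, ⨅ j : Fin T.length, dist (S.get i) (T.get j) ^ 2)
      ≤ DTW S T := by
  refine le_trans ?_ (key (S.length + T.length) S T le_rfl hS hT)
  rw [ENNReal.ofReal_sum_of_nonneg (fun i _ => Real.iInf_nonneg fun j => sq_nonneg _)]
  exact Finset.sum_le_sum fun i _ => le_iInf fun j =>
    ENNReal.ofReal_le_ofReal (ciInf_le (Finite.bddBelow_range _) j)
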